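/- arXiv:1705.07261 — 3 statements merged into one kernel-verified Lean document; each statement's English description precedes it below -/
import Mathlib

section
/- Consider one inner loop of SARAH (SARAH-IN). Suppose each f_i is L-smooth. Then the iterates satisfy: the sum over t = 0,...,m of E[||∇P(w_t)||²] is at most (2/η)[P(w_0) − P(w_*)] + Σ_{t=0}^{m} E[||∇P(w_t) − v_t||²] − (1 − Lη) Σ_{t=0}^{m} E[||v_t||²], where w_* is a global minimizer of P. -/
open scoped BigOperators

noncomputable section

/-- Vectors in `ℝ^d`. -/
abbrev Vec (d : ℕ) := EuclideanSpace ℝ (Fin d)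

/-- The type of mini-batches of size `b` from `{1,…,n}` (modeled as `Fin n`). -/
def Batch (n b : ℕ) : Type := {s : Finset (Fin n) // s.card = b}

instance (n b : ℕ) : Fintype (Batch n b) :=
  inferInstanceAs (Fintype {s : Finset (Fin n) // s.card = b})

/-- Expectation (uniform average) over a finite sample space. -/
def expec {Ω : Type*} [Fintype Ω] (F : Ω → ℝ) : ℝ :=
  (Fintype.card Ω : ℝ)⁻¹ * ∑ ω, F ω

/-- The SARAH-IN state `(w_t, v_t)` given a starting point `w0`, a learning rate `η`,
a batch size `b` and a sequence of mini-batches `I` (where `I t` is the batch used to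
form `v_t`, for `t ≥ 1`). -/
def sarahState {d n : ℕ} (f : Fin n → Vec d → ℝ) (w0 : Vec d) (η : ℝ) (b : ℕ)
    (I : ℕ → Finset (Fin n)) : ℕ → Vec d × Vec d
  | 0 => (w0, (n : ℝ)⁻¹ • ∑ i, gradient (f i) w0)
  | t + 1 =>
    let p := sarahState f w0 η b I t
    let w' := p.1 - η • p.2
    (w', (b : ℝ)⁻¹ • ∑ i ∈ I (t + 1), (gradient (f i) w' - gradient (f i) p.1) + p.2)

/-- Extend a finite sequence of mini-batches to all of `ℕ` (indices `≥ T` are irrelevant). -/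
def pad {n b T : ℕ} (ω : Fin T → Batch n b) : ℕ → Finset (Fin n) :=
  fun t => if h : t < T then (ω ⟨t, h⟩).1 else ∅

/- ### Auxiliary lemmas -/

lemma expec_le_expec {Ω : Type*} [Fintype Ω] {F G : Ω → ℝ} (h : ∀ ω, F ω ≤ G ω) :
    expec F ≤ expec G := by
  unfold expec
  have : (0:ℝ) ≤ (Fintype.card Ω : ℝ)⁻¹ := by positivity
  exact mul_le_mul_of_nonneg_left (Finset.sum_le_sum fun ω _ => h ω) this

lemma expec_add {Ω : Type*} [Fintype Ω] (F G : Ω → ℝ) :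
    expec (fun ω => F ω + G ω) = expec F + expec G := by
  simp [expec, Finset.sum_add_distrib, mul_add]

lemma expec_sub {Ω : Type*} [Fintype Ω] (F G : Ω → ℝ) :
    expec (fun ω => F ω - G ω) = expec F - expec G := by
  simp [expec, Finset.sum_sub_distrib, mul_sub]

lemma expec_const {Ω : Type*} [Fintype Ω] [Nonempty Ω] (c : ℝ) :
    expec (fun _ : Ω => c) = c := by
  have h : (Fintype.card Ω : ℝ) ≠ 0 := by exact_mod_cast Fintype.card_ne_zero
  simp [expec, Finset.sum_const, Finset.card_univ, nsmul_eq_mul, ← mul_assoc,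
    inv_mul_cancel₀ h]

lemma expec_const_mul {Ω : Type*} [Fintype Ω] (c : ℝ) (F : Ω → ℝ) :
    expec (fun ω => c * F ω) = c * expec F := by
  simp only [expec, ← Finset.mul_sum]
  ring

lemma sum_expec {Ω : Type*} [Fintype Ω] (m : ℕ) (G : ℕ → Ω → ℝ) :
    ∑ t ∈ Finset.range (m + 1), expec (fun ω => G t ω)
      = expec (fun ω => ∑ t ∈ Finset.range (m + 1), G t ω) := by
  simp only [expec, Finset.mul_sum]
  rw [Finset.sum_comm]

/-- The descent lemma: a function with `L`-Lipschitz gradient satisfies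
`P y ≤ P x + ⟪∇P x, y - x⟫ + L/2 ‖y - x‖²`. -/
lemma descent_lemma {F : Type*} [NormedAddCommGroup F] [InnerProductSpace ℝ F]
    [CompleteSpace F]
    (P : F → ℝ) (g : F → F) (hg : ∀ x, HasGradientAt P (g x) x)
    (L : ℝ) (hlip : ∀ x y, ‖g x - g y‖ ≤ L * ‖x - y‖) (x y : F) :
    P y ≤ P x + inner ℝ (g x) (y - x) + L / 2 * ‖y - x‖ ^ 2 := by
  set c : F := y - x with hc
  set φ : ℝ → ℝ := fun s => P (x + s • c) - s * inner ℝ (g x) c - L / 2 * s ^ 2 * ‖c‖ ^ 2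
    with hφdef
  have hline : ∀ s : ℝ, HasDerivAt (fun s : ℝ => x + s • c) c s := by
    intro s
    simpa using ((hasDerivAt_id s).smul_const c).const_add x
  have hDP : ∀ s : ℝ, HasDerivAt (fun s : ℝ => P (x + s • c))
      (inner ℝ (g (x + s • c)) c : ℝ) s := by
    intro s
    have := ((hg (x + s • c)).hasFDerivAt).comp_hasDerivAt s (hline s)
    simpa [InnerProductSpace.toDual_apply_apply, Function.comp_def] using this
  have hφ : ∀ s : ℝ, HasDerivAt φ
      ((inner ℝ (g (x + s • c)) c : ℝ) - inner ℝ (g x) c - L * s * ‖c‖ ^ 2) s := by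
    intro s
    have h1 : HasDerivAt (fun s : ℝ => s * (inner ℝ (g x) c : ℝ)) (inner ℝ (g x) c : ℝ) s := by
      simpa using (hasDerivAt_id s).mul_const (inner ℝ (g x) c : ℝ)
    have h2 : HasDerivAt (fun s : ℝ => L / 2 * s ^ 2 * ‖c‖ ^ 2) (L * s * ‖c‖ ^ 2) s := by
      have := ((hasDerivAt_pow 2 s).const_mul (L / 2)).mul_const (‖c‖ ^ 2)
      refine this.congr_deriv ?_
      simp only [Nat.cast_ofNat, Nat.add_one_sub_one, pow_one]
      ring
    exact ((hDP s).sub h1).sub h2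
  have hanti : AntitoneOn φ (Set.Icc (0:ℝ) 1) := by
    apply antitoneOn_of_deriv_nonpos (convex_Icc 0 1)
    · exact fun s _ => ((hφ s).continuousAt.continuousWithinAt)
    · intro s _
      exact ((hφ s).differentiableAt).differentiableWithinAt
    · intro s hs
      rw [interior_Icc] at hs
      rw [(hφ s).deriv]
      have key : (inner ℝ (g (x + s • c)) c : ℝ) - inner ℝ (g x) c ≤ L * s * ‖c‖ ^ 2 := by
        have h1 : (inner ℝ (g (x + s • c)) c : ℝ) - inner ℝ (g x) c
            = inner ℝ (g (x + s • c) - g x) c := by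
          rw [inner_sub_left]
        rw [h1]
        calc (inner ℝ (g (x + s • c) - g x) c : ℝ) ≤ ‖g (x + s • c) - g x‖ * ‖c‖ :=
              real_inner_le_norm _ _
          _ ≤ (L * ‖(x + s • c) - x‖) * ‖c‖ := by
              gcongr
              exact hlip _ _
          _ = L * s * ‖c‖ ^ 2 := by
              rw [add_sub_cancel_left, norm_smul, Real.norm_eq_abs, abs_of_pos hs.1]
              ring
      linarith
  have := hanti (Set.left_mem_Icc.2 zero_le_one) (Set.right_mem_Icc.2 zero_le_one)
    zero_le_one
  simp only [hφdef, zero_smul, add_zero, one_smul, zero_pow, one_pow] at this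
  have hxy : x + c = y := by rw [hc]; abel
  rw [hxy] at this
  nlinarith [this]

/-- Pointwise (per-sample-path) form of the SARAH sum bound. -/
lemma traj_bound {d : ℕ} (P : Vec d → ℝ) (hPd : Differentiable ℝ P)
    (L : ℝ)
    (hlip : ∀ x y : Vec d, ‖gradient P x - gradient P y‖ ≤ L * ‖x - y‖)
    (wstar : Vec d) (hmin : ∀ w, P wstar ≤ P w)
    (η : ℝ) (hη : 0 < η)
    (w v : ℕ → Vec d) (hw : ∀ t, w (t + 1) = w t - η • v t) (m : ℕ) :
    ∑ t ∈ Finset.range (m + 1), ‖gradient P (w t)‖ ^ 2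
      ≤ 2 / η * (P (w 0) - P wstar)
        + ∑ t ∈ Finset.range (m + 1), ‖gradient P (w t) - v t‖ ^ 2
        - (1 - L * η) * ∑ t ∈ Finset.range (m + 1), ‖v t‖ ^ 2 := by
  have hg : ∀ x, HasGradientAt P (gradient P x) x := fun x => (hPd x).hasGradientAt
  have step : ∀ t, η * ‖gradient P (w t)‖ ^ 2
      ≤ 2 * (P (w t) - P (w (t + 1))) + η * ‖gradient P (w t) - v t‖ ^ 2
        - η * (1 - L * η) * ‖v t‖ ^ 2 := by
    intro t
    have hd := descent_lemma P (gradient P) hg L hlip (w t) (w (t + 1))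
    rw [hw t] at hd
    have h1 : w t - η • v t - w t = -(η • v t) := by abel
    rw [h1, inner_neg_right, real_inner_smul_right] at hd
    have h2 : ‖-(η • v t)‖ ^ 2 = η ^ 2 * ‖v t‖ ^ 2 := by
      rw [norm_neg, norm_smul, Real.norm_eq_abs, abs_of_pos hη, mul_pow]
    rw [h2] at hd
    have hi : (inner ℝ (gradient P (w t)) (v t) : ℝ)
        = (‖gradient P (w t)‖ ^ 2 + ‖v t‖ ^ 2 - ‖gradient P (w t) - v t‖ ^ 2) / 2 := by
      have := norm_sub_sq_real (gradient P (w t)) (v t)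
      linarith
    rw [hi] at hd
    rw [hw t]
    ring_nf at hd ⊢
    linarith
  have hsum := Finset.sum_le_sum (fun t (_ : t ∈ Finset.range (m + 1)) => step t)
  rw [← Finset.mul_sum] at hsum
  have htel : ∑ t ∈ Finset.range (m + 1), (2 * (P (w t) - P (w (t + 1)))
      + η * ‖gradient P (w t) - v t‖ ^ 2 - η * (1 - L * η) * ‖v t‖ ^ 2)
      = 2 * (P (w 0) - P (w (m + 1)))
        + η * ∑ t ∈ Finset.range (m + 1), ‖gradient P (w t) - v t‖ ^ 2
        - η * (1 - L * η) * ∑ t ∈ Finset.range (m + 1), ‖v t‖ ^ 2 := by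
    rw [Finset.sum_sub_distrib, Finset.sum_add_distrib, ← Finset.mul_sum,
      ← Finset.mul_sum, ← Finset.mul_sum, Finset.sum_range_sub' (fun t => P (w t))]
  rw [htel] at hsum
  have hstar : P wstar ≤ P (w (m + 1)) := hmin _
  have hnum : (∑ t ∈ Finset.range (m + 1), ‖gradient P (w t)‖ ^ 2
      - ∑ t ∈ Finset.range (m + 1), ‖gradient P (w t) - v t‖ ^ 2
      + (1 - L * η) * ∑ t ∈ Finset.range (m + 1), ‖v t‖ ^ 2)
      ≤ 2 / η * (P (w 0) - P wstar) := by
    rw [div_mul_eq_mul_div, le_div_iff₀ hη]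
    nlinarith [hsum, hstar]
  linarith

/-- **Lemma 1 of SARAH (nonconvex).** One inner loop of SARAH with `L`-smooth components:
`∑_{t=0}^m E‖∇P(w_t)‖² ≤ (2/η)(P(w₀) − P(w⋆)) + ∑_{t=0}^m E‖∇P(w_t) − v_t‖²
  − (1 − Lη) ∑_{t=0}^m E‖v_t‖²`. -/
theorem sarah_in_sum_grad_bound
    {d n : ℕ} (hn : 1 ≤ n)
    (f : Fin n → Vec d → ℝ) (L : ℝ) (hL : 0 < L)
    (hdiff : ∀ i, Differentiable ℝ (f i))
    (hsmooth : ∀ i (w w' : Vec d),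
      ‖gradient (f i) w - gradient (f i) w'‖ ≤ L * ‖w - w'‖)
    (P : Vec d → ℝ) (hP : P = fun w => (n : ℝ)⁻¹ * ∑ i, f i w)
    (wstar : Vec d) (hmin : ∀ w, P wstar ≤ P w)
    (w0 : Vec d) (η : ℝ) (hη : 0 < η) (b m : ℕ) (hb : 1 ≤ b) (hbn : b ≤ n) :
    ∑ t ∈ Finset.range (m + 1),
        expec (fun ω : Fin (m + 1) → Batch n b =>
          ‖gradient P ((sarahState f w0 η b (pad ω) t).1)‖ ^ 2)
      ≤ 2 / η * (P w0 - P wstar)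
        + ∑ t ∈ Finset.range (m + 1),
            expec (fun ω : Fin (m + 1) → Batch n b =>
              ‖gradient P ((sarahState f w0 η b (pad ω) t).1)
                - (sarahState f w0 η b (pad ω) t).2‖ ^ 2)
        - (1 - L * η) * ∑ t ∈ Finset.range (m + 1),
            expec (fun ω : Fin (m + 1) → Batch n b =>
              ‖(sarahState f w0 η b (pad ω) t).2‖ ^ 2) := by
  have hn0 : (n : ℝ) ≠ 0 := by positivity
  -- gradient of P
  have hgP : ∀ x : Vec d, HasGradientAt P ((n : ℝ)⁻¹ • ∑ i, gradient (f i) x) x := by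
    intro x
    have h1 : HasFDerivAt (fun w => ∑ i, f i w)
        (∑ i, InnerProductSpace.toDual ℝ (Vec d) (gradient (f i) x)) x :=
      HasFDerivAt.fun_sum fun i _ => ((hdiff i x).hasGradientAt).hasFDerivAt
    have h2 := h1.const_mul ((n : ℝ)⁻¹)
    rw [hP]
    have h3 := h2.hasGradientAt
    simpa [map_smul, map_sum, gradient] using h3
  have hPd : Differentiable ℝ P := fun x => (hgP x).differentiableAt
  have hgradP : ∀ x : Vec d, gradient P x = (n : ℝ)⁻¹ • ∑ i, gradient (f i) x :=
    fun x => (hgP x).gradient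
  have hlipP : ∀ x y : Vec d, ‖gradient P x - gradient P y‖ ≤ L * ‖x - y‖ := by
    intro x y
    rw [hgradP x, hgradP y, ← smul_sub, ← Finset.sum_sub_distrib]
    rw [norm_smul, Real.norm_eq_abs, abs_of_nonneg (by positivity : (0:ℝ) ≤ (n:ℝ)⁻¹)]
    calc (n : ℝ)⁻¹ * ‖∑ i, (gradient (f i) x - gradient (f i) y)‖
        ≤ (n : ℝ)⁻¹ * ∑ i, ‖gradient (f i) x - gradient (f i) y‖ := by
          gcongr
          exact norm_sum_le _ _
      _ ≤ (n : ℝ)⁻¹ * ∑ _i : Fin n, L * ‖x - y‖ := by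
          gcongr with i
          exact hsmooth i x y
      _ = L * ‖x - y‖ := by
          rw [Finset.sum_const, Finset.card_univ, Fintype.card_fin, nsmul_eq_mul]
          field_simp
  -- nonemptiness of the sample space
  have hB : Nonempty (Batch n b) := by
    obtain ⟨s, _, hs⟩ := Finset.exists_subset_card_eq (s := (Finset.univ : Finset (Fin n))) (n := b)
      (by simpa using hbn)
    exact ⟨⟨s, hs⟩⟩
  haveI : Nonempty (Fin (m + 1) → Batch n b) := ⟨fun _ => hB.some⟩
  -- pointwise bound
  have hpt : ∀ ω : Fin (m + 1) → Batch n b,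
      (∑ t ∈ Finset.range (m + 1), ‖gradient P ((sarahState f w0 η b (pad ω) t).1)‖ ^ 2)
      ≤ 2 / η * (P w0 - P wstar)
        + ∑ t ∈ Finset.range (m + 1),
            ‖gradient P ((sarahState f w0 η b (pad ω) t).1)
              - (sarahState f w0 η b (pad ω) t).2‖ ^ 2
        - (1 - L * η) * ∑ t ∈ Finset.range (m + 1),
            ‖(sarahState f w0 η b (pad ω) t).2‖ ^ 2 := by
    intro ω
    exact traj_bound P hPd L hlipP wstar hmin η hη
      (fun t => (sarahState f w0 η b (pad ω) t).1)
      (fun t => (sarahState f w0 η b (pad ω) t).2)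
      (fun t => rfl) m
  -- assemble expectations
  rw [sum_expec, sum_expec, sum_expec]
  calc expec (fun ω : Fin (m + 1) → Batch n b =>
        ∑ t ∈ Finset.range (m + 1), ‖gradient P ((sarahState f w0 η b (pad ω) t).1)‖ ^ 2)
      ≤ expec (fun ω : Fin (m + 1) → Batch n b =>
          2 / η * (P w0 - P wstar)
          + ∑ t ∈ Finset.range (m + 1),
              ‖gradient P ((sarahState f w0 η b (pad ω) t).1)
                - (sarahState f w0 η b (pad ω) t).2‖ ^ 2
          - (1 - L * η) * ∑ t ∈ Finset.range (m + 1),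
              ‖(sarahState f w0 η b (pad ω) t).2‖ ^ 2) := expec_le_expec hpt
    _ = _ := by
        rw [expec_sub, expec_add, expec_const, expec_const_mul]
end
end

section
/- Consider one inner loop of SARAH (SARAH-IN) with each f_i L-smooth. For any t ≥ 1, E[||∇P(w_t) − v_t||²] = Σ_{j=1}^{t} E[||v_j − v_{j−1}||²] − Σ_{j=1}^{t} E[||∇P(w_j) − ∇P(w_{j−1})||²]. -/
open scoped BigOperators

noncomputable section

open InnerProductSpace

/-! ### Auxiliary lemmas -/

/-- The number of `b`-subsets of `Fin n` containing a fixed element `i`. -/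
lemma count_mem_powersetCard {n b : ℕ} (hb : 1 ≤ b) (i : Fin n) :
    ((Finset.univ.powersetCard b : Finset (Finset (Fin n))).filter (fun s => i ∈ s)).card
      = (n - 1).choose (b - 1) := by
  have h : ((Finset.univ.powersetCard b : Finset (Finset (Fin n))).filter
        (fun s => i ∈ s)).card
      = ((Finset.univ.erase i).powersetCard (b - 1)).card := by
    apply Finset.card_nbij' (fun s => s.erase i) (fun u => insert i u)
    · intro s hs
      simp only [Finset.mem_coe, Finset.mem_filter, Finset.mem_powersetCard] at hs
      simp only [Finset.mem_coe, Finset.mem_powersetCard]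
      exact ⟨Finset.erase_subset_erase i hs.1.1, by rw [Finset.card_erase_of_mem hs.2, hs.1.2]⟩
    · intro u hu
      simp only [Finset.mem_coe, Finset.mem_powersetCard] at hu
      have hiu : i ∉ u := fun h => (Finset.mem_erase.mp (hu.1 h)).1 rfl
      simp only [Finset.mem_coe, Finset.mem_filter, Finset.mem_powersetCard]
      refine ⟨⟨Finset.subset_univ _, ?_⟩, Finset.mem_insert_self i u⟩
      rw [Finset.card_insert_of_notMem hiu, hu.2, Nat.sub_add_cancel hb]
    · intro s hs
      simp only [Finset.mem_coe, Finset.mem_filter] at hs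
      exact Finset.insert_erase hs.2
    · intro u hu
      simp only [Finset.mem_coe, Finset.mem_powersetCard] at hu
      exact Finset.erase_insert (fun h => (Finset.mem_erase.mp (hu.1 h)).1 rfl)
  rw [h, Finset.card_powersetCard, Finset.card_erase_of_mem (Finset.mem_univ i),
    Finset.card_univ, Fintype.card_fin]

lemma card_batch (n b : ℕ) : Fintype.card (Batch n b) = n.choose b := by
  have h : Fintype.card (Batch n b)
      = ((Finset.univ : Finset (Finset (Fin n))).filter (fun s => s.card = b)).card :=
    Fintype.card_subtype _
  rw [h]
  have he : (Finset.univ : Finset (Finset (Fin n))).filter (fun s => s.card = b)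
      = Finset.univ.powersetCard b := by
    ext s; simp [Finset.mem_powersetCard]
  rw [he, Finset.card_powersetCard, Finset.card_univ, Fintype.card_fin]

/-- Averaging `(1/b) ∑_{i ∈ S} g i` over all `b`-subsets `S` yields `(1/n) ∑ g i`. -/
lemma batch_sum {n b : ℕ} (hn : 1 ≤ n) (hb : 1 ≤ b) (hbn : b ≤ n)
    {E : Type*} [AddCommGroup E] [Module ℝ E] (g : Fin n → E) :
    ∑ x : Batch n b, (b : ℝ)⁻¹ • ∑ i ∈ x.1, g i
      = (Fintype.card (Batch n b) : ℝ) • ((n : ℝ)⁻¹ • ∑ i, g i) := by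
  have h1 : ∑ x : Batch n b, ∑ i ∈ x.1, g i
      = ∑ s ∈ Finset.univ.powersetCard b, ∑ i ∈ s, g i := by
    show ∑ x : {s : Finset (Fin n) // s.card = b}, ∑ i ∈ x.1, g i = _
    exact (Finset.sum_subtype (Finset.univ.powersetCard b)
      (by intro s; simp [Finset.mem_powersetCard]) (fun s => ∑ i ∈ s, g i)).symm
  have h2 : ∑ s ∈ Finset.univ.powersetCard b, ∑ i ∈ s, g i
      = (((n - 1).choose (b - 1) : ℝ)) • ∑ i, g i := by
    have hs : ∀ s ∈ (Finset.univ.powersetCard b : Finset (Finset (Fin n))),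
        ∑ i ∈ s, g i = ∑ i : Fin n, if i ∈ s then g i else 0 := by
      intro s _; rw [Finset.sum_ite_mem, Finset.univ_inter]
    rw [Finset.sum_congr rfl hs, Finset.sum_comm, Finset.smul_sum]
    refine Finset.sum_congr rfl fun i _ => ?_
    rw [Finset.sum_ite, Finset.sum_const_zero, add_zero, Finset.sum_const,
      count_mem_powersetCard hb i, ← Nat.cast_smul_eq_nsmul ℝ]
  have hc : ((b : ℝ))⁻¹ * ((n - 1).choose (b - 1) : ℝ) = (n.choose b : ℝ) * (n : ℝ)⁻¹ := by
    have key : n * (n - 1).choose (b - 1) = n.choose b * b := by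
      have h := Nat.add_one_mul_choose_eq (n - 1) (b - 1)
      have e1 : n - 1 + 1 = n := by omega
      have e2 : b - 1 + 1 = b := by omega
      rwa [e1, e2] at h
    have hb0 : (b : ℝ) ≠ 0 := Nat.cast_ne_zero.mpr (by omega)
    have hn0 : (n : ℝ) ≠ 0 := Nat.cast_ne_zero.mpr (by omega)
    field_simp
    have hcast := congrArg (fun k : ℕ => (k : ℝ)) key
    push_cast at hcast
    linarith
  rw [← Finset.smul_sum, h1, h2, smul_smul, smul_smul, card_batch, hc]

/-- The key algebraic identity behind the variance decomposition: if `X` averages to `a`,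
then `∑ ‖p + a - X‖² = ∑ (‖p‖² + ‖X‖² - ‖a‖²)`. -/
lemma step_sum {E : Type*} [NormedAddCommGroup E] [InnerProductSpace ℝ E]
    {Ω : Type*} [Fintype Ω] (p a : E) (X : Ω → E)
    (h : ∑ ω, X ω = (Fintype.card Ω : ℝ) • a) :
    ∑ ω, ‖p + a - X ω‖ ^ 2 = ∑ ω, (‖p‖ ^ 2 + ‖X ω‖ ^ 2 - ‖a‖ ^ 2) := by
  have key : ∑ ω, (inner ℝ (p + a) (X ω) : ℝ) = (Fintype.card Ω : ℝ) * inner ℝ (p + a) a := by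
    rw [← inner_sum, h, real_inner_smul_right]
  have expand : ∀ ω : Ω, ‖p + a - X ω‖ ^ 2
      = ‖p + a‖ ^ 2 - 2 * (inner ℝ (p + a) (X ω) : ℝ) + ‖X ω‖ ^ 2 :=
    fun ω => norm_sub_sq_real _ _
  rw [Finset.sum_congr rfl (fun ω _ => expand ω)]
  rw [Finset.sum_add_distrib, Finset.sum_sub_distrib, Finset.sum_const, ← Finset.mul_sum, key]
  conv_rhs => rw [Finset.sum_sub_distrib, Finset.sum_add_distrib, Finset.sum_const,
    Finset.sum_const]
  have hpa : ‖p + a‖ ^ 2 = ‖p‖ ^ 2 + 2 * (inner ℝ p a : ℝ) + ‖a‖ ^ 2 := norm_add_sq_real p a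
  have hinner : (inner ℝ (p + a) a : ℝ) = inner ℝ p a + ‖a‖ ^ 2 := by
    rw [inner_add_left, real_inner_self_eq_norm_sq]
  rw [hpa, hinner]
  simp only [Finset.card_univ, nsmul_eq_mul]
  ring

/-- The gradient of `P = (1/n) ∑ f i` is the average of the gradients. -/
lemma gradP {d n : ℕ} (f : Fin n → Vec d → ℝ) (hdiff : ∀ i, Differentiable ℝ (f i))
    (P : Vec d → ℝ) (hP : P = fun w => (n : ℝ)⁻¹ * ∑ i, f i w) (w : Vec d) :
    gradient P w = (n : ℝ)⁻¹ • ∑ i, gradient (f i) w := by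
  have h1 : HasFDerivAt P
      (((n : ℝ)⁻¹ : ℝ) • ∑ i, (toDual ℝ (Vec d)) (gradient (f i) w)) w := by
    rw [hP]
    exact (HasFDerivAt.fun_sum fun i _ =>
      ((hdiff i w).hasGradientAt).hasFDerivAt).const_mul _
  have h2 : (((n : ℝ)⁻¹ : ℝ) • ∑ i, (toDual ℝ (Vec d)) (gradient (f i) w))
      = toDual ℝ (Vec d) ((n : ℝ)⁻¹ • ∑ i, gradient (f i) w) := by
    rw [map_smul, map_sum]
  rw [h2] at h1
  exact (hasGradientAt_iff_hasFDerivAt.mpr h1).gradient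

/-- The SARAH state at time `t` only depends on the mini-batches at times `≤ t`. -/
lemma sarah_congr {d n : ℕ} (f : Fin n → Vec d → ℝ) (w0 : Vec d) (η : ℝ) (b : ℕ)
    {I I' : ℕ → Finset (Fin n)} :
    ∀ t : ℕ, (∀ k, k ≤ t → I k = I' k) →
      sarahState f w0 η b I t = sarahState f w0 η b I' t
  | 0, _ => rfl
  | (t + 1), h => by
    simp only [sarahState]
    rw [sarah_congr f w0 η b t (fun k hk => h k (hk.trans (Nat.le_succ t))),
      h (t + 1) le_rfl]

/-- One-step expectation identity (conditioning on the batches before time `j`). -/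
lemma step_expec {d n : ℕ} (hn : 1 ≤ n) (f : Fin n → Vec d → ℝ)
    (hdiff : ∀ i, Differentiable ℝ (f i))
    (P : Vec d → ℝ) (hP : P = fun w => (n : ℝ)⁻¹ * ∑ i, f i w)
    (w0 : Vec d) (η : ℝ) (b : ℕ) (hb : 1 ≤ b) (hbn : b ≤ n)
    {T : ℕ} (j : ℕ) (hj1 : 1 ≤ j) (hjT : j < T) :
    ∑ ω : Fin T → Batch n b,
        ‖gradient P ((sarahState f w0 η b (pad ω) j).1)
          - (sarahState f w0 η b (pad ω) j).2‖ ^ 2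
      = ∑ ω : Fin T → Batch n b,
          (‖gradient P ((sarahState f w0 η b (pad ω) (j - 1)).1)
              - (sarahState f w0 η b (pad ω) (j - 1)).2‖ ^ 2
           + ‖(sarahState f w0 η b (pad ω) j).2
              - (sarahState f w0 η b (pad ω) (j - 1)).2‖ ^ 2
           - ‖gradient P ((sarahState f w0 η b (pad ω) j).1)
              - gradient P ((sarahState f w0 η b (pad ω) (j - 1)).1)‖ ^ 2) := by
  obtain ⟨j', rfl⟩ : ∃ j'', j = j'' + 1 := ⟨j - 1, by omega⟩
  simp only [Nat.add_sub_cancel]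
  set jF : Fin T := ⟨j' + 1, hjT⟩ with hjF
  set e := Equiv.funSplitAt jF (Batch n b) with he
  rw [← Equiv.sum_comp e.symm, ← Equiv.sum_comp e.symm
    (fun ω : Fin T → Batch n b =>
      (‖gradient P ((sarahState f w0 η b (pad ω) j').1)
          - (sarahState f w0 η b (pad ω) j').2‖ ^ 2
       + ‖(sarahState f w0 η b (pad ω) (j' + 1)).2
          - (sarahState f w0 η b (pad ω) j').2‖ ^ 2
       - ‖gradient P ((sarahState f w0 η b (pad ω) (j' + 1)).1)
          - gradient P ((sarahState f w0 η b (pad ω) j').1)‖ ^ 2))]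
  rw [Fintype.sum_prod_type_right, Fintype.sum_prod_type_right]
  refine Finset.sum_congr rfl fun rest _ => ?_
  obtain ⟨s₀, -, hs₀⟩ := Finset.exists_subset_card_eq
    (show b ≤ (Finset.univ : Finset (Fin n)).card by simpa using hbn)
  set x₀ : Batch n b := ⟨s₀, hs₀⟩ with hx₀
  set I₀ : ℕ → Finset (Fin n) := pad (e.symm (x₀, rest)) with hI₀
  have hpad : ∀ (x : Batch n b) (k : ℕ), k ≤ j' → pad (e.symm (x, rest)) k = I₀ k := by
    intro x k hk
    simp only [hI₀, pad]
    by_cases h : k < T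
    · have hne : (⟨k, h⟩ : Fin T) ≠ jF := by
        intro hkk
        have := congrArg Fin.val hkk
        simp only [hjF] at this
        omega
      simp only [dif_pos h, he, Equiv.funSplitAt_symm_apply, dif_neg hne]
    · simp only [dif_neg h]
  have hstate : ∀ x : Batch n b,
      sarahState f w0 η b (pad (e.symm (x, rest))) j' = sarahState f w0 η b I₀ j' :=
    fun x => sarah_congr f w0 η b j' (hpad x)
  set W : Vec d := (sarahState f w0 η b I₀ j').1 with hW
  set V : Vec d := (sarahState f w0 η b I₀ j').2 with hV
  set w' : Vec d := W - η • V with hw'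
  set g : Fin n → Vec d := fun i => gradient (f i) w' - gradient (f i) W with hg
  set X : Batch n b → Vec d := fun x => (b : ℝ)⁻¹ • ∑ i ∈ x.1, g i with hX
  have hbatch : ∀ x : Batch n b, pad (e.symm (x, rest)) (j' + 1) = x.1 := by
    intro x
    simp only [pad, dif_pos hjT]
    have h : (⟨j' + 1, hjT⟩ : Fin T) = jF := rfl
    rw [h]
    simp [he, Equiv.funSplitAt_symm_apply]
  have hstatej : ∀ x : Batch n b,
      sarahState f w0 η b (pad (e.symm (x, rest))) (j' + 1) = (w', X x + V) := by
    intro x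
    simp only [sarahState]
    rw [hstate x, hbatch x]
  set p : Vec d := gradient P W - V with hp
  set a : Vec d := gradient P w' - gradient P W with ha'
  have ha : a = (n : ℝ)⁻¹ • ∑ i, g i := by
    rw [ha', gradP f hdiff P hP w', gradP f hdiff P hP W, ← smul_sub,
      ← Finset.sum_sub_distrib]
  have hXsum : ∑ x : Batch n b, X x = (Fintype.card (Batch n b) : ℝ) • a := by
    rw [ha]; exact batch_sum hn hb hbn g
  calc
    ∑ x : Batch n b,
        ‖gradient P ((sarahState f w0 η b (pad (e.symm (x, rest))) (j' + 1)).1)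
          - (sarahState f w0 η b (pad (e.symm (x, rest))) (j' + 1)).2‖ ^ 2
      = ∑ x : Batch n b, ‖p + a - X x‖ ^ 2 := by
        refine Finset.sum_congr rfl fun x _ => ?_
        rw [hstatej x]
        show ‖gradient P w' - (X x + V)‖ ^ 2 = _
        have hvec : gradient P w' - (X x + V) = p + a - X x := by rw [hp, ha']; abel
        rw [hvec]
    _ = ∑ x : Batch n b, (‖p‖ ^ 2 + ‖X x‖ ^ 2 - ‖a‖ ^ 2) := step_sum p a X hXsum
    _ = _ := by
        refine Finset.sum_congr rfl fun x _ => ?_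
        rw [hstatej x, hstate x]
        show _ = ‖gradient P W - V‖ ^ 2 + ‖(X x + V) - V‖ ^ 2
          - ‖gradient P w' - gradient P W‖ ^ 2
        rw [add_sub_cancel_right, hp, ha']

/-- **Lemma 2 of SARAH (nonconvex).** For any `t ≥ 1`,
`E‖∇P(w_t) − v_t‖² = ∑_{j=1}^t E‖v_j − v_{j−1}‖² − ∑_{j=1}^t E‖∇P(w_j) − ∇P(w_{j−1})‖²`. -/
theorem sarah_in_variance_decomposition
    {d n : ℕ} (hn : 1 ≤ n)
    (f : Fin n → Vec d → ℝ) (L : ℝ) (hL : 0 < L)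
    (hdiff : ∀ i, Differentiable ℝ (f i))
    (hsmooth : ∀ i (w w' : Vec d),
      ‖gradient (f i) w - gradient (f i) w'‖ ≤ L * ‖w - w'‖)
    (P : Vec d → ℝ) (hP : P = fun w => (n : ℝ)⁻¹ * ∑ i, f i w)
    (w0 : Vec d) (η : ℝ) (hη : 0 < η) (b : ℕ) (hb : 1 ≤ b) (hbn : b ≤ n)
    (t : ℕ) (ht : 1 ≤ t) :
    expec (fun ω : Fin (t + 1) → Batch n b =>
        ‖gradient P ((sarahState f w0 η b (pad ω) t).1)
          - (sarahState f w0 η b (pad ω) t).2‖ ^ 2)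
      = ∑ j ∈ Finset.Icc 1 t,
          expec (fun ω : Fin (t + 1) → Batch n b =>
            ‖(sarahState f w0 η b (pad ω) j).2
              - (sarahState f w0 η b (pad ω) (j - 1)).2‖ ^ 2)
        - ∑ j ∈ Finset.Icc 1 t,
            expec (fun ω : Fin (t + 1) → Batch n b =>
              ‖gradient P ((sarahState f w0 η b (pad ω) j).1)
                - gradient P ((sarahState f w0 η b (pad ω) (j - 1)).1)‖ ^ 2) := by
  have key : ∀ m : ℕ, m ≤ t →
      ∑ ω : Fin (t + 1) → Batch n b,
          ‖gradient P ((sarahState f w0 η b (pad ω) m).1)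
            - (sarahState f w0 η b (pad ω) m).2‖ ^ 2
        = ∑ j ∈ Finset.Icc 1 m, ∑ ω : Fin (t + 1) → Batch n b,
              ‖(sarahState f w0 η b (pad ω) j).2
                - (sarahState f w0 η b (pad ω) (j - 1)).2‖ ^ 2
          - ∑ j ∈ Finset.Icc 1 m, ∑ ω : Fin (t + 1) → Batch n b,
              ‖gradient P ((sarahState f w0 η b (pad ω) j).1)
                - gradient P ((sarahState f w0 η b (pad ω) (j - 1)).1)‖ ^ 2 := by
    intro m
    induction m with
    | zero =>
      intro _
      have h0 : ∀ ω : Fin (t + 1) → Batch n b,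
          gradient P ((sarahState f w0 η b (pad ω) 0).1)
            - (sarahState f w0 η b (pad ω) 0).2 = 0 := by
        intro ω
        show gradient P w0 - ((n : ℝ)⁻¹ • ∑ i, gradient (f i) w0) = 0
        rw [gradP f hdiff P hP w0, sub_self]
      rw [Finset.sum_congr rfl fun ω _ => by rw [h0 ω]]
      simp
    | succ m ih =>
      intro hm1
      have hmle : m ≤ t := by omega
      have hstep := step_expec hn f hdiff P hP w0 η b hb hbn (T := t + 1) (m + 1)
        (by omega) (by omega)
      simp only [Nat.add_sub_cancel] at hstep
      rw [hstep, Finset.sum_sub_distrib, Finset.sum_add_distrib, ih hmle,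
        Finset.sum_Icc_succ_top (by omega : 1 ≤ m + 1),
        Finset.sum_Icc_succ_top (by omega : 1 ≤ m + 1)]
      simp only [Nat.add_sub_cancel]
      ring
  simp only [expec]
  rw [key t le_rfl, mul_sub, Finset.mul_sum, Finset.mul_sum]
end
end

section
/- Consider one inner loop of SARAH (SARAH-IN) with each f_i L-smooth. For any t ≥ 1, E[||∇P(w_t) − v_t||²] ≤ (1/b)·((n−b)/(n−1))·L²η² · Σ_{j=1}^{t} E[||v_{j−1}||²]. -/
open scoped BigOperators

noncomputable section

/-! ### Auxiliary lemmas -/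

section Aux

open Finset

/-- Number of `k`-subsets of `s` containing a fixed subset `T`. -/
lemma count_supersets {α : Type*} [DecidableEq α] (s T : Finset α) (hT : T ⊆ s) (k : ℕ)
    (hk : T.card ≤ k) :
    ((Finset.powersetCard k s).filter (fun S => T ⊆ S)).card
      = ((s \ T).card).choose (k - T.card) := by
  rw [← Finset.card_powersetCard]
  apply Finset.card_bij' (fun S _ => S \ T) (fun U _ => U ∪ T)
  · intro S hS
    simp only [Finset.mem_filter, Finset.mem_powersetCard] at hS
    obtain ⟨⟨hSs, hScard⟩, hTS⟩ := hS
    rw [Finset.mem_powersetCard]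
    exact ⟨Finset.sdiff_subset_sdiff hSs le_rfl, by rw [Finset.card_sdiff_of_subset hTS, hScard]⟩
  · intro U hU
    rw [Finset.mem_powersetCard] at hU
    obtain ⟨hUs, hUcard⟩ := hU
    have hdisj : Disjoint U T := Finset.disjoint_of_subset_left hUs Finset.sdiff_disjoint
    simp only [Finset.mem_filter, Finset.mem_powersetCard]
    refine ⟨⟨Finset.union_subset (hUs.trans Finset.sdiff_subset) hT, ?_⟩,
      Finset.subset_union_right⟩
    rw [Finset.card_union_of_disjoint hdisj, hUcard]
    omega
  · intro S hS
    simp only [Finset.mem_filter, Finset.mem_powersetCard] at hS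
    exact Finset.sdiff_union_of_subset hS.2
  · intro U hU
    rw [Finset.mem_powersetCard] at hU
    have hdisj : Disjoint U T := Finset.disjoint_of_subset_left hU.1 Finset.sdiff_disjoint
    rw [Finset.union_sdiff_right, Finset.sdiff_eq_self_of_disjoint hdisj]

/-- The finset of batches, as a finset of finsets. -/
def batchSet (n b : ℕ) : Finset (Finset (Fin n)) := Finset.powersetCard b Finset.univ

lemma card_batchSet {n b : ℕ} : (batchSet n b).card = n.choose b := by
  simp [batchSet, Finset.card_powersetCard]

lemma mem_batchSet_card {n b : ℕ} {S : Finset (Fin n)} (h : S ∈ batchSet n b) : S.card = b :=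
  (Finset.mem_powersetCard_univ).1 h

lemma count1 {n b : ℕ} (hb : 1 ≤ b) (i : Fin n) :
    ((batchSet n b).filter (fun S => i ∈ S)).card = (n-1).choose (b-1) := by
  have h := count_supersets (Finset.univ : Finset (Fin n)) {i} (by simp) b (by simpa)
  simpa [batchSet, Finset.singleton_subset_iff, Finset.card_sdiff] using h

lemma count2 {n b : ℕ} (hb : 1 ≤ b) {i j : Fin n} (hij : i ≠ j) :
    ((batchSet n b).filter (fun S => i ∈ S ∧ j ∈ S)).card
      = if 2 ≤ b then (n-2).choose (b-2) else 0 := by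
  have hcard2 : ({i, j} : Finset (Fin n)).card = 2 := by
    rw [Finset.card_insert_of_notMem (by simpa), Finset.card_singleton]
  have heq : (batchSet n b).filter (fun S => i ∈ S ∧ j ∈ S)
      = (batchSet n b).filter (fun S => ({i, j} : Finset (Fin n)) ⊆ S) := by
    apply Finset.filter_congr
    intro S _
    simp [Finset.insert_subset_iff]
  rw [heq]
  by_cases h2 : 2 ≤ b
  · have h := count_supersets (Finset.univ : Finset (Fin n)) {i, j} (by simp) b (by omega)
    rw [if_pos h2, batchSet, h, Finset.card_sdiff_of_subset (by simp), hcard2,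
      Finset.card_univ, Fintype.card_fin]
  · rw [if_neg h2]
    have hb1 : b = 1 := by omega
    rw [Finset.card_eq_zero, Finset.filter_eq_empty_iff]
    intro S hS hsub
    have := Finset.card_le_card hsub
    rw [hcard2] at this
    rw [batchSet, Finset.mem_powersetCard_univ, hb1] at hS
    omega

lemma rel1 {n b : ℕ} (hn : 1 ≤ n) (hb1 : 1 ≤ b) :
    (n : ℝ) * ((n-1).choose (b-1) : ℕ) = (b : ℝ) * (n.choose b : ℕ) := by
  obtain ⟨n', rfl⟩ : ∃ n', n = n' + 1 := ⟨n - 1, by omega⟩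
  obtain ⟨b', rfl⟩ : ∃ b', b = b' + 1 := ⟨b - 1, by omega⟩
  simp only [Nat.add_sub_cancel]
  have h := congrArg (Nat.cast (R := ℝ)) (Nat.add_one_mul_choose_eq n' b')
  push_cast at h ⊢
  linear_combination h

lemma rel2 {n b : ℕ} (hn : 2 ≤ n) (hb1 : 1 ≤ b) :
    ((n : ℝ) - 1) * ((if 2 ≤ b then (n-2).choose (b-2) else 0 : ℕ) : ℝ)
      = ((b : ℝ) - 1) * ((n-1).choose (b-1) : ℕ) := by
  by_cases h2 : 2 ≤ b
  · rw [if_pos h2]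
    obtain ⟨n', rfl⟩ : ∃ n', n = n' + 2 := ⟨n - 2, by omega⟩
    obtain ⟨b', rfl⟩ : ∃ b', b = b' + 2 := ⟨b - 2, by omega⟩
    simp only [show n' + 2 - 2 = n' by omega, show b' + 2 - 2 = b' by omega,
      show n' + 2 - 1 = n' + 1 by omega, show b' + 2 - 1 = b' + 1 by omega]
    have h := congrArg (Nat.cast (R := ℝ)) (Nat.add_one_mul_choose_eq n' b')
    push_cast at h ⊢
    linear_combination h
  · rw [if_neg h2]
    have hb1' : b = 1 := by omega
    subst hb1'
    norm_num

variable {E : Type*} [NormedAddCommGroup E] [InnerProductSpace ℝ E]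
variable {n b : ℕ}

local notation "⟪" x ", " y "⟫" => @inner ℝ _ _ x y

lemma sum_over_eq_sum_ite {M : Type*} [AddCommMonoid M] (S : Finset (Fin n)) (g : Fin n → M) :
    ∑ i ∈ S, g i = ∑ i : Fin n, (if i ∈ S then g i else 0) := by
  rw [Finset.sum_ite_mem, Finset.univ_inter]

omit [InnerProductSpace ℝ E] in
lemma sum_batch_sum (hb : 1 ≤ b) (y : Fin n → E) :
    ∑ S ∈ batchSet n b, ∑ i ∈ S, y i = ((n-1).choose (b-1)) • ∑ i, y i := by
  rw [Finset.sum_congr rfl (fun S _ => sum_over_eq_sum_ite S y), Finset.sum_comm,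
    Finset.smul_sum]
  apply Finset.sum_congr rfl
  intro i _
  rw [← Finset.sum_filter, Finset.sum_const, count1 hb i]

lemma sum_batch_sq (hb : 1 ≤ b) (y : Fin n → E) :
    ∑ S ∈ batchSet n b, ‖∑ i ∈ S, y i‖^2
      = ((((n-1).choose (b-1) : ℕ) : ℝ)
          - (((if 2 ≤ b then (n-2).choose (b-2) else 0 : ℕ)) : ℝ)) * ∑ i, ‖y i‖^2
        + ((if 2 ≤ b then (n-2).choose (b-2) else 0 : ℕ) : ℝ) * ‖∑ i, y i‖^2 := by
  set N1 : ℕ := (n-1).choose (b-1) with hN1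
  set N2 : ℕ := if 2 ≤ b then (n-2).choose (b-2) else 0 with hN2
  have step1 : ∑ S ∈ batchSet n b, ‖∑ i ∈ S, y i‖^2
      = ∑ S ∈ batchSet n b, ∑ i : Fin n, ∑ j : Fin n,
          (if i ∈ S ∧ j ∈ S then ⟪y i, y j⟫ else 0) := by
    apply Finset.sum_congr rfl
    intro S _
    rw [← real_inner_self_eq_norm_sq, sum_inner,
      sum_over_eq_sum_ite S (fun i => ⟪y i, ∑ j ∈ S, y j⟫)]
    apply Finset.sum_congr rfl
    intro i _
    by_cases hi : i ∈ S
    · simp only [hi, if_pos, true_and, inner_sum]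
      exact sum_over_eq_sum_ite S (fun j => ⟪y i, y j⟫)
    · simp [hi]
  have step2 : ∑ S ∈ batchSet n b, ∑ i : Fin n, ∑ j : Fin n,
          (if i ∈ S ∧ j ∈ S then ⟪y i, y j⟫ else 0)
      = ∑ i : Fin n, ∑ j : Fin n,
          (((batchSet n b).filter (fun S => i ∈ S ∧ j ∈ S)).card : ℝ) * ⟪y i, y j⟫ := by
    rw [Finset.sum_comm]
    apply Finset.sum_congr rfl
    intro i _
    rw [Finset.sum_comm]
    apply Finset.sum_congr rfl
    intro j _
    rw [← Finset.sum_filter, Finset.sum_const, nsmul_eq_mul]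
  have step3 : ∀ i j : Fin n,
      (((batchSet n b).filter (fun S => i ∈ S ∧ j ∈ S)).card : ℝ)
        = (N2 : ℝ) + (if i = j then (N1 : ℝ) - (N2 : ℝ) else 0) := by
    intro i j
    by_cases hij : i = j
    · subst hij
      simp only [and_self, if_pos]
      rw [count1 hb i]
      ring
    · rw [count2 hb hij, if_neg hij]
      ring
  rw [step1, step2]
  have expand : ∀ i j : Fin n,
      (((batchSet n b).filter (fun S => i ∈ S ∧ j ∈ S)).card : ℝ) * ⟪y i, y j⟫
        = (N2 : ℝ) * ⟪y i, y j⟫ + (if i = j then ((N1:ℝ) - N2) * ⟪y i, y j⟫ else 0) := by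
    intro i j
    rw [step3 i j]
    split_ifs <;> ring
  simp_rw [expand, Finset.sum_add_distrib]
  have diag : ∀ i : Fin n, ∑ j : Fin n, (if i = j then ((N1:ℝ) - N2) * ⟪y i, y j⟫ else 0)
      = ((N1:ℝ) - N2) * ‖y i‖^2 := by
    intro i
    rw [Finset.sum_ite_eq, if_pos (Finset.mem_univ i), real_inner_self_eq_norm_sq]
  have offd : ∑ i : Fin n, ∑ j : Fin n, (N2 : ℝ) * ⟪y i, y j⟫ = (N2 : ℝ) * ‖∑ i, y i‖^2 := by
    simp_rw [← Finset.mul_sum, ← inner_sum]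
    rw [← sum_inner, real_inner_self_eq_norm_sq]
  simp_rw [diag]
  rw [offd, ← Finset.mul_sum]
  ring

lemma sum_centered_le (hn : 1 ≤ n) (x : Fin n → E) :
    ∑ i, ‖x i - (n:ℝ)⁻¹ • ∑ k, x k‖^2 ≤ ∑ i, ‖x i‖^2 := by
  set c : E := (n:ℝ)⁻¹ • ∑ k, x k with hc
  have hn0 : (n:ℝ) ≠ 0 := by positivity
  have hsum : ∑ k, x k = (n:ℝ) • c := by
    rw [hc, smul_smul, mul_inv_cancel₀ hn0, one_smul]
  have expand : ∀ i, ‖x i - c‖^2 = ‖x i‖^2 - 2 * ⟪x i, c⟫ + ‖c‖^2 := fun i => by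
    rw [norm_sub_sq_real]
  calc ∑ i, ‖x i - c‖^2 = ∑ i, (‖x i‖^2 - 2 * ⟪x i, c⟫ + ‖c‖^2) :=
        Finset.sum_congr rfl (fun i _ => expand i)
    _ = ∑ i, ‖x i‖^2 - 2 * ⟪∑ i, x i, c⟫ + (n:ℝ) * ‖c‖^2 := by
        rw [Finset.sum_add_distrib, Finset.sum_sub_distrib, ← Finset.mul_sum,
          ← sum_inner, Finset.sum_const, Finset.card_univ, Fintype.card_fin,
          nsmul_eq_mul]
    _ = ∑ i, ‖x i‖^2 - (n:ℝ) * ‖c‖^2 := by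
        rw [hsum, real_inner_smul_left, real_inner_self_eq_norm_sq]
        ring
    _ ≤ ∑ i, ‖x i‖^2 := by
        have : 0 ≤ (n:ℝ) * ‖c‖^2 := by positivity
        linarith

lemma var_bound (hn : 2 ≤ n) (hb : 1 ≤ b) (hbn : b ≤ n) (x : Fin n → E) :
    ((batchSet n b).card : ℝ)⁻¹ * ∑ S ∈ batchSet n b,
        ‖((n:ℝ)⁻¹ • ∑ i, x i) - (b:ℝ)⁻¹ • ∑ i ∈ S, x i‖^2
      ≤ 1/(b:ℝ) * (((n:ℝ) - b)/((n:ℝ)-1)) * ((n:ℝ)⁻¹ * ∑ i, ‖x i‖^2) := by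
  have hn0 : (n:ℝ) ≠ 0 := by positivity
  have hb0 : (b:ℝ) ≠ 0 := by positivity
  have hn1 : ((n:ℝ) - 1) ≠ 0 := by
    have : (2:ℝ) ≤ n := by exact_mod_cast hn
    linarith
  set xbar : E := (n:ℝ)⁻¹ • ∑ i, x i with hxbar
  set y : Fin n → E := fun i => x i - xbar with hy
  have hysum : ∑ i, y i = 0 := by
    simp only [hy]
    rw [Finset.sum_sub_distrib, Finset.sum_const, Finset.card_univ, Fintype.card_fin,
      hxbar, ← Nat.cast_smul_eq_nsmul ℝ, smul_smul, mul_inv_cancel₀ hn0, one_smul, sub_self]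
  have hterm : ∀ S ∈ batchSet n b,
      ‖xbar - (b:ℝ)⁻¹ • ∑ i ∈ S, x i‖^2 = ((b:ℝ)⁻¹)^2 * ‖∑ i ∈ S, y i‖^2 := by
    intro S hS
    have hsb : ∑ i ∈ S, y i = (∑ i ∈ S, x i) - (b:ℝ) • xbar := by
      simp only [hy]
      rw [Finset.sum_sub_distrib, Finset.sum_const, mem_batchSet_card hS,
        ← Nat.cast_smul_eq_nsmul ℝ]
    have : xbar - (b:ℝ)⁻¹ • ∑ i ∈ S, x i = -((b:ℝ)⁻¹ • ∑ i ∈ S, y i) := by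
      rw [hsb, smul_sub, smul_smul, inv_mul_cancel₀ hb0, one_smul, neg_sub]
    rw [this, norm_neg, norm_smul, mul_pow]
    congr 1
    rw [Real.norm_eq_abs, sq_abs]
  set N1 : ℕ := (n-1).choose (b-1) with hN1
  set N2 : ℕ := if 2 ≤ b then (n-2).choose (b-2) else 0 with hN2
  set Nb : ℕ := n.choose b with hNb
  have hNb0 : (Nb:ℝ) ≠ 0 := by
    have : 0 < Nb := Nat.choose_pos hbn
    positivity
  have h1 : (n : ℝ) * N1 = (b : ℝ) * Nb := rel1 (by omega) hb
  have h2 : ((n : ℝ) - 1) * N2 = ((b : ℝ) - 1) * N1 := rel2 hn hb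
  calc ((batchSet n b).card : ℝ)⁻¹ * ∑ S ∈ batchSet n b,
          ‖xbar - (b:ℝ)⁻¹ • ∑ i ∈ S, x i‖^2
      = (Nb:ℝ)⁻¹ * (((b:ℝ)⁻¹)^2 * (((N1:ℝ) - N2) * ∑ i, ‖y i‖^2)) := by
        rw [Finset.sum_congr rfl hterm, ← Finset.mul_sum, sum_batch_sq hb y, hysum,
          card_batchSet]
        simp only [norm_zero]
        ring
    _ = 1/(b:ℝ) * (((n:ℝ) - b)/((n:ℝ)-1)) * ((n:ℝ)⁻¹ * ∑ i, ‖y i‖^2) := by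
        have e1 : (N1:ℝ) = (b:ℝ) * Nb / n := by
          field_simp
          linear_combination h1
        have e2 : (N2:ℝ) = ((b:ℝ)-1) * N1 / ((n:ℝ)-1) := by
          field_simp
          linear_combination h2
        have coef : (Nb:ℝ)⁻¹ * (((b:ℝ)⁻¹)^2 * ((N1:ℝ) - N2))
            = 1/(b:ℝ) * (((n:ℝ) - b)/((n:ℝ)-1)) * (n:ℝ)⁻¹ := by
          rw [e2, e1]
          field_simp
          ring
        calc (Nb:ℝ)⁻¹ * (((b:ℝ)⁻¹)^2 * (((N1:ℝ) - N2) * ∑ i, ‖y i‖^2))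
            = ((Nb:ℝ)⁻¹ * (((b:ℝ)⁻¹)^2 * ((N1:ℝ) - N2))) * ∑ i, ‖y i‖^2 := by ring
          _ = (1/(b:ℝ) * (((n:ℝ) - b)/((n:ℝ)-1)) * (n:ℝ)⁻¹) * ∑ i, ‖y i‖^2 := by rw [coef]
          _ = 1/(b:ℝ) * (((n:ℝ) - b)/((n:ℝ)-1)) * ((n:ℝ)⁻¹ * ∑ i, ‖y i‖^2) := by ring
    _ ≤ 1/(b:ℝ) * (((n:ℝ) - b)/((n:ℝ)-1)) * ((n:ℝ)⁻¹ * ∑ i, ‖x i‖^2) := by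
        have hyx : ∑ i, ‖y i‖^2 ≤ ∑ i, ‖x i‖^2 := sum_centered_le (by omega) x
        have hc : 0 ≤ 1/(b:ℝ) * (((n:ℝ) - b)/((n:ℝ)-1)) * (n:ℝ)⁻¹ := by
          have hb' : (0:ℝ) < b := by positivity
          have h1' : (0:ℝ) ≤ (n:ℝ) - b := by
            have : (b:ℝ) ≤ n := by exact_mod_cast hbn
            linarith
          have h2' : (0:ℝ) < (n:ℝ) - 1 := by
            have : (2:ℝ) ≤ n := by exact_mod_cast hn
            linarith
          positivity
        calc 1/(b:ℝ) * (((n:ℝ) - b)/((n:ℝ)-1)) * ((n:ℝ)⁻¹ * ∑ i, ‖y i‖^2)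
            = (1/(b:ℝ) * (((n:ℝ) - b)/((n:ℝ)-1)) * (n:ℝ)⁻¹) * ∑ i, ‖y i‖^2 := by ring
          _ ≤ (1/(b:ℝ) * (((n:ℝ) - b)/((n:ℝ)-1)) * (n:ℝ)⁻¹) * ∑ i, ‖x i‖^2 :=
              mul_le_mul_of_nonneg_left hyx hc
          _ = 1/(b:ℝ) * (((n:ℝ) - b)/((n:ℝ)-1)) * ((n:ℝ)⁻¹ * ∑ i, ‖x i‖^2) := by ring

omit [InnerProductSpace ℝ E] in
lemma mean_zero (hn : 1 ≤ n) (hb : 1 ≤ b) (hbn : b ≤ n) (x : Fin n → E)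
    [Module ℝ E] [IsBoundedSMul ℝ E] :
    ∑ S ∈ batchSet n b, (((n:ℝ)⁻¹ • ∑ i, x i) - (b:ℝ)⁻¹ • ∑ i ∈ S, x i) = 0 := by
  have hn0 : (n:ℝ) ≠ 0 := by positivity
  have hb0 : (b:ℝ) ≠ 0 := by positivity
  rw [Finset.sum_sub_distrib, Finset.sum_const, ← Finset.smul_sum, sum_batch_sum hb x,
    card_batchSet, ← Nat.cast_smul_eq_nsmul ℝ, ← Nat.cast_smul_eq_nsmul ℝ (n := (n-1).choose (b-1)),
    smul_smul, smul_smul, ← sub_smul]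
  have h1 : (n : ℝ) * ((n-1).choose (b-1) : ℕ) = (b : ℝ) * (n.choose b : ℕ) := rel1 hn hb
  have hz : (n.choose b : ℝ) * (n:ℝ)⁻¹ - (b:ℝ)⁻¹ * ((n-1).choose (b-1) : ℕ) = 0 := by
    field_simp
    linear_combination -h1
  rw [hz, zero_smul]

/-- The core conditional bound: for fixed `a` and vectors `x i` of norm at most `M`,
averaging over batches. -/
lemma cond_bound {d : ℕ} (hn : 2 ≤ n) (hb : 1 ≤ b) (hbn : b ≤ n)
    (x : Fin n → Vec d) (a : Vec d) (M : ℝ) (hM : 0 ≤ M) (hx : ∀ i, ‖x i‖ ≤ M) :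
    ∑ S ∈ batchSet n b,
        ‖(((n:ℝ)⁻¹ • ∑ i, x i) - (b:ℝ)⁻¹ • ∑ i ∈ S, x i) + a‖^2
      ≤ (n.choose b : ℝ) * (‖a‖^2 + 1/(b:ℝ) * (((n:ℝ) - b)/((n:ℝ)-1)) * M^2) := by
  set u : Finset (Fin n) → Vec d :=
    fun S => ((n:ℝ)⁻¹ • ∑ i, x i) - (b:ℝ)⁻¹ • ∑ i ∈ S, x i with hu
  have hNb0 : (0:ℝ) < (n.choose b : ℝ) := by
    exact_mod_cast Nat.choose_pos hbn
  have expand : ∀ S ∈ batchSet n b,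
      ‖u S + a‖^2 = ‖u S‖^2 + 2 * ⟪u S, a⟫ + ‖a‖^2 := fun S _ => norm_add_sq_real _ _
  rw [Finset.sum_congr rfl expand, Finset.sum_add_distrib, Finset.sum_add_distrib,
    ← Finset.mul_sum, ← sum_inner]
  have hmz : ∑ S ∈ batchSet n b, u S = 0 := mean_zero (by omega) hb hbn x
  rw [hmz, inner_zero_left, mul_zero, add_zero, Finset.sum_const, card_batchSet,
    nsmul_eq_mul]
  have hvar : ∑ S ∈ batchSet n b, ‖u S‖^2
      ≤ (n.choose b : ℝ) * (1/(b:ℝ) * (((n:ℝ) - b)/((n:ℝ)-1)) * ((n:ℝ)⁻¹ * ∑ i, ‖x i‖^2)) := by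
    have h := var_bound hn hb hbn x
    rw [card_batchSet] at h
    calc ∑ S ∈ batchSet n b, ‖u S‖^2
        = (n.choose b : ℝ) * ((n.choose b : ℝ)⁻¹ * ∑ S ∈ batchSet n b, ‖u S‖^2) := by
          rw [← mul_assoc, mul_inv_cancel₀ (ne_of_gt hNb0), one_mul]
      _ ≤ (n.choose b : ℝ) * (1/(b:ℝ) * (((n:ℝ) - b)/((n:ℝ)-1)) * ((n:ℝ)⁻¹ * ∑ i, ‖x i‖^2)) :=
          mul_le_mul_of_nonneg_left h (le_of_lt hNb0)
  have hxM : (n:ℝ)⁻¹ * ∑ i, ‖x i‖^2 ≤ M^2 := by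
    have hsum : ∑ i, ‖x i‖^2 ≤ (n:ℝ) * M^2 := by
      calc ∑ i, ‖x i‖^2 ≤ ∑ _i : Fin n, M^2 :=
            Finset.sum_le_sum (fun i _ => by
              have := hx i
              nlinarith [norm_nonneg (x i)])
        _ = (n:ℝ) * M^2 := by
            rw [Finset.sum_const, Finset.card_univ, Fintype.card_fin, nsmul_eq_mul]
    have hn0 : (0:ℝ) < (n:ℝ) := by
      have : 0 < n := by omega
      exact_mod_cast this
    rw [inv_mul_le_iff₀ hn0]
    linarith
  have hC0 : (0:ℝ) ≤ 1/(b:ℝ) * (((n:ℝ) - b)/((n:ℝ)-1)) := by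
    have hb' : (0:ℝ) < b := by positivity
    have h1' : (0:ℝ) ≤ (n:ℝ) - b := by
      have : (b:ℝ) ≤ n := by exact_mod_cast hbn
      linarith
    have h2' : (0:ℝ) < (n:ℝ) - 1 := by
      have : (2:ℝ) ≤ n := by exact_mod_cast hn
      linarith
    positivity
  have : ∑ S ∈ batchSet n b, ‖u S‖^2
      ≤ (n.choose b : ℝ) * (1/(b:ℝ) * (((n:ℝ) - b)/((n:ℝ)-1)) * M^2) := by
    refine hvar.trans (mul_le_mul_of_nonneg_left ?_ (le_of_lt hNb0))
    exact mul_le_mul_of_nonneg_left hxM hC0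
  nlinarith [this]

end Aux

section Prob

open Finset

lemma card_Batch {n b : ℕ} : Fintype.card (Batch n b) = n.choose b := by
  have h1 : Fintype.card (Batch n b)
      = (Finset.univ.filter (fun S : Finset (Fin n) => S.card = b)).card :=
    Fintype.card_subtype _
  rw [h1, ← card_batchSet]
  congr 1
  rw [batchSet, Finset.powersetCard_eq_filter, Finset.powerset_univ]

lemma sum_batch_coe {n b : ℕ} {M : Type*} [AddCommMonoid M] (g : Finset (Fin n) → M) :
    ∑ s : Batch n b, g s.1 = ∑ S ∈ batchSet n b, g S :=
  (Finset.sum_subtype (batchSet n b) (fun S => Finset.mem_powersetCard_univ) g).symm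

lemma nonempty_batch {n b : ℕ} (hbn : b ≤ n) : Nonempty (Batch n b) := by
  have h : 0 < (batchSet n b).card := by
    rw [card_batchSet]; exact Nat.choose_pos hbn
  obtain ⟨S, hS⟩ := Finset.card_pos.1 h
  exact ⟨⟨S, mem_batchSet_card hS⟩⟩

/-- Summing over update of one coordinate counts everything `card B` times. -/
lemma sum_update_eq {m : ℕ} {B : Type*} [Fintype B] (j : Fin m) (F : (Fin m → B) → ℝ) :
    ∑ ω : Fin m → B, ∑ s : B, F (Function.update ω j s)
      = (Fintype.card B : ℝ) * ∑ ω : Fin m → B, F ω := by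
  classical
  set e := Equiv.funSplitAt j B with he
  have key : ∀ (g : { k : Fin m // k ≠ j } → B) (s s' : B),
      Function.update (e.symm (s', g)) j s = e.symm (s, g) := by
    intro g s s'
    funext k
    by_cases hk : k = j
    · subst hk
      simp [Function.update_self, he, Equiv.funSplitAt, Equiv.piSplitAt]
    · simp [Function.update_of_ne hk, he, Equiv.funSplitAt, Equiv.piSplitAt, hk]
  calc ∑ ω : Fin m → B, ∑ s : B, F (Function.update ω j s)
      = ∑ p : B × ({ k : Fin m // k ≠ j } → B), ∑ s : B, F (Function.update (e.symm p) j s) :=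
        (Equiv.sum_comp e.symm (fun ω => ∑ s : B, F (Function.update ω j s))).symm
    _ = ∑ p : B × ({ k : Fin m // k ≠ j } → B), ∑ s : B, F (e.symm (s, p.2)) := by
        apply Finset.sum_congr rfl
        intro p _
        apply Finset.sum_congr rfl
        intro s _
        rw [show e.symm p = e.symm (p.1, p.2) by rfl, key p.2 s p.1]
    _ = ∑ s' : B, ∑ g : { k : Fin m // k ≠ j } → B, ∑ s : B, F (e.symm (s, g)) := by
        rw [Fintype.sum_prod_type]
    _ = (Fintype.card B : ℝ) * ∑ g : { k : Fin m // k ≠ j } → B, ∑ s : B, F (e.symm (s, g)) := by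
        rw [Finset.sum_const, Finset.card_univ, nsmul_eq_mul]
    _ = (Fintype.card B : ℝ) * ∑ p : B × ({ k : Fin m // k ≠ j } → B), F (e.symm p) := by
        rw [Fintype.sum_prod_type]
        congr 1
        exact Finset.sum_comm
    _ = (Fintype.card B : ℝ) * ∑ ω : Fin m → B, F ω := by
        rw [Equiv.sum_comp e.symm F]

/-- Conditional-averaging bound. -/
lemma expec_le_of_update {m : ℕ} {B : Type*} [Fintype B] [Nonempty B] (j : Fin m)
    (F G : (Fin m → B) → ℝ)
    (h : ∀ ω, ∑ s : B, F (Function.update ω j s) ≤ (Fintype.card B : ℝ) * G ω) :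
    expec F ≤ expec G := by
  have hB : (0:ℝ) < (Fintype.card B : ℝ) := by
    have : 0 < Fintype.card B := Fintype.card_pos
    exact_mod_cast this
  unfold expec
  apply mul_le_mul_of_nonneg_left _ (by positivity)
  have h1 : (Fintype.card B : ℝ) * ∑ ω : Fin m → B, F ω
      = ∑ ω : Fin m → B, ∑ s : B, F (Function.update ω j s) := (sum_update_eq j F).symm
  have h2 : ∑ ω : Fin m → B, ∑ s : B, F (Function.update ω j s)
      ≤ ∑ ω : Fin m → B, (Fintype.card B : ℝ) * G ω := Finset.sum_le_sum (fun ω _ => h ω)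
  rw [← Finset.mul_sum] at h2
  have := h1 ▸ h2
  exact le_of_mul_le_mul_left this hB

lemma expec_add_mul {Ω : Type*} [Fintype Ω] (F G : Ω → ℝ) (c : ℝ) :
    expec (fun ω => F ω + c * G ω) = expec F + c * expec G := by
  unfold expec
  rw [Finset.sum_add_distrib, ← Finset.mul_sum]
  ring

lemma gradient_avg {d n : ℕ} (f : Fin n → Vec d → ℝ) (hdiff : ∀ i, Differentiable ℝ (f i))
    (w : Vec d) :
    gradient (fun w => (n:ℝ)⁻¹ * ∑ i, f i w) w = (n:ℝ)⁻¹ • ∑ i, gradient (f i) w := by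
  have h1 : fderiv ℝ (fun w => (n:ℝ)⁻¹ * ∑ i, f i w) w
      = (n:ℝ)⁻¹ • ∑ i, fderiv ℝ (f i) w := by
    rw [fderiv_const_mul (DifferentiableAt.fun_sum (fun i _ => (hdiff i w))) ((n:ℝ)⁻¹),
      fderiv_fun_sum (fun i _ => (hdiff i w))]
  unfold gradient
  rw [h1, map_smul, map_sum]

lemma sarahState_congr {d n : ℕ} (f : Fin n → Vec d → ℝ) (w0 : Vec d) (η : ℝ) (b : ℕ)
    (I I' : ℕ → Finset (Fin n)) :
    ∀ (k : ℕ), (∀ r, 1 ≤ r → r ≤ k → I r = I' r) →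
      sarahState f w0 η b I k = sarahState f w0 η b I' k
  | 0, _ => rfl
  | (k+1), h => by
    have ih := sarahState_congr f w0 η b I I' k (fun r h1 h2 => h r h1 (Nat.le_succ_of_le h2))
    simp only [sarahState]
    rw [ih, h (k+1) (by omega) le_rfl]

end Prob

set_option maxHeartbeats 2000000 in
open Finset in
lemma sarah_step {d n : ℕ} (hn : 2 ≤ n)
    (f : Fin n → Vec d → ℝ) (L : ℝ) (hL : 0 < L)
    (hdiff : ∀ i, Differentiable ℝ (f i))
    (hsmooth : ∀ i (w w' : Vec d),
      ‖gradient (f i) w - gradient (f i) w'‖ ≤ L * ‖w - w'‖)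
    (P : Vec d → ℝ) (hP : P = fun w => (n : ℝ)⁻¹ * ∑ i, f i w)
    (w0 : Vec d) (η : ℝ) (hη : 0 < η) (b : ℕ) (hb : 1 ≤ b) (hbn : b ≤ n)
    (t k : ℕ) (hk : k + 1 ≤ t) :
    expec (fun ω : Fin (t + 1) → Batch n b =>
        ‖gradient P ((sarahState f w0 η b (pad ω) (k+1)).1)
          - (sarahState f w0 η b (pad ω) (k+1)).2‖ ^ 2)
      ≤ expec (fun ω : Fin (t + 1) → Batch n b =>
          ‖gradient P ((sarahState f w0 η b (pad ω) k).1)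
            - (sarahState f w0 η b (pad ω) k).2‖ ^ 2
          + (1/(b:ℝ) * (((n:ℝ) - b)/((n:ℝ)-1)) * L^2 * η^2)
            * ‖(sarahState f w0 η b (pad ω) k).2‖ ^ 2) := by
  haveI : Nonempty (Batch n b) := nonempty_batch hbn
  have hgrad : ∀ u, gradient P u = (n:ℝ)⁻¹ • ∑ i, gradient (f i) u := fun u => by
    rw [hP]; exact gradient_avg f hdiff u
  set c : Fin (t+1) := ⟨k+1, by omega⟩ with hcdef
  apply expec_le_of_update c
  intro ω
  set p := sarahState f w0 η b (pad ω) k with hp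
  set x : Fin n → Vec d :=
    fun i => gradient (f i) (p.1 - η • p.2) - gradient (f i) p.1 with hx
  have hupd : ∀ s : Batch n b,
      sarahState f w0 η b (pad (Function.update ω c s)) (k+1)
        = (p.1 - η • p.2, (b:ℝ)⁻¹ • ∑ i ∈ s.1, x i + p.2) := by
    intro s
    have hprev : sarahState f w0 η b (pad (Function.update ω c s)) k = p := by
      rw [hp]
      apply sarahState_congr
      intro r h1 h2
      have hrc : r ≠ k+1 := by omega
      unfold pad
      by_cases hr : r < t+1
      · rw [dif_pos hr, dif_pos hr,
          Function.update_of_ne (Fin.ne_of_val_ne (by simpa using hrc))]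
      · rw [dif_neg hr, dif_neg hr]
    have hbatch : pad (Function.update ω c s) (k+1) = s.1 := by
      unfold pad
      rw [dif_pos (show k+1 < t+1 by omega)]
      have h2 : (⟨k+1, show k+1 < t+1 by omega⟩ : Fin (t+1)) = c := rfl
      rw [h2, Function.update_self]
    show sarahState f w0 η b (pad (Function.update ω c s)) (k+1) = _
    simp only [sarahState]
    rw [hprev, hbatch]
  have hxnorm : ∀ i, ‖x i‖ ≤ L * (η * ‖p.2‖) := by
    intro i
    have h1 := hsmooth i (p.1 - η • p.2) p.1
    have h2 : p.1 - η • p.2 - p.1 = -(η • p.2) := by abel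
    rw [h2, norm_neg, norm_smul, Real.norm_eq_abs, abs_of_pos hη] at h1
    simpa [hx] using h1
  have hM : 0 ≤ L * (η * ‖p.2‖) := by positivity
  calc ∑ s : Batch n b,
        ‖gradient P ((sarahState f w0 η b (pad (Function.update ω c s)) (k+1)).1)
          - (sarahState f w0 η b (pad (Function.update ω c s)) (k+1)).2‖ ^ 2
      = ∑ s : Batch n b,
          ‖gradient P (p.1 - η • p.2) - ((b:ℝ)⁻¹ • ∑ i ∈ s.1, x i + p.2)‖ ^ 2 := by
        apply Finset.sum_congr rfl
        intro s _
        rw [hupd s]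
    _ = ∑ S ∈ batchSet n b,
          ‖gradient P (p.1 - η • p.2) - ((b:ℝ)⁻¹ • ∑ i ∈ S, x i + p.2)‖ ^ 2 :=
        sum_batch_coe (fun S => ‖gradient P (p.1 - η • p.2) - ((b:ℝ)⁻¹ • ∑ i ∈ S, x i + p.2)‖ ^ 2)
    _ = ∑ S ∈ batchSet n b,
          ‖(((n:ℝ)⁻¹ • ∑ i, x i) - (b:ℝ)⁻¹ • ∑ i ∈ S, x i) + (gradient P p.1 - p.2)‖ ^ 2 := by
        apply Finset.sum_congr rfl
        intro S _
        congr 1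
        have hsx : ∑ i, x i
            = (∑ i, gradient (f i) (p.1 - η • p.2)) - ∑ i, gradient (f i) p.1 := by
          rw [hx, Finset.sum_sub_distrib]
        rw [hgrad (p.1 - η • p.2), hgrad p.1, hsx, smul_sub]
        abel
    _ ≤ (n.choose b : ℝ) * (‖gradient P p.1 - p.2‖^2
          + 1/(b:ℝ) * (((n:ℝ) - b)/((n:ℝ)-1)) * (L * (η * ‖p.2‖))^2) :=
        cond_bound hn hb hbn x (gradient P p.1 - p.2) (L * (η * ‖p.2‖)) hM hxnorm
    _ = (Fintype.card (Batch n b) : ℝ) * (‖gradient P p.1 - p.2‖ ^ 2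
          + (1/(b:ℝ) * (((n:ℝ) - b)/((n:ℝ)-1)) * L^2 * η^2) * ‖p.2‖ ^ 2) := by
        rw [card_Batch]
        ring

/-- **Lemma 3 of SARAH (nonconvex).** For any `t ≥ 1`,
`E‖∇P(w_t) − v_t‖² ≤ (1/b)·((n−b)/(n−1))·L²η² ∑_{j=1}^t E‖v_{j−1}‖²`. -/
theorem sarah_in_variance_bound
    {d n : ℕ} (hn : 2 ≤ n)
    (f : Fin n → Vec d → ℝ) (L : ℝ) (hL : 0 < L)
    (hdiff : ∀ i, Differentiable ℝ (f i))
    (hsmooth : ∀ i (w w' : Vec d),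
      ‖gradient (f i) w - gradient (f i) w'‖ ≤ L * ‖w - w'‖)
    (P : Vec d → ℝ) (hP : P = fun w => (n : ℝ)⁻¹ * ∑ i, f i w)
    (w0 : Vec d) (η : ℝ) (hη : 0 < η) (b : ℕ) (hb : 1 ≤ b) (hbn : b ≤ n)
    (t : ℕ) (ht : 1 ≤ t) :
    expec (fun ω : Fin (t + 1) → Batch n b =>
        ‖gradient P ((sarahState f w0 η b (pad ω) t).1)
          - (sarahState f w0 η b (pad ω) t).2‖ ^ 2)
      ≤ 1 / (b : ℝ) * (((n : ℝ) - (b : ℝ)) / ((n : ℝ) - 1)) * L ^ 2 * η ^ 2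
          * ∑ j ∈ Finset.Icc 1 t,
              expec (fun ω : Fin (t + 1) → Batch n b =>
                ‖(sarahState f w0 η b (pad ω) (j - 1)).2‖ ^ 2) := by
  have hgrad : ∀ u, gradient P u = (n:ℝ)⁻¹ • ∑ i, gradient (f i) u := fun u => by
    rw [hP]; exact gradient_avg f hdiff u
  have key : ∀ k, k ≤ t →
      expec (fun ω : Fin (t + 1) → Batch n b =>
        ‖gradient P ((sarahState f w0 η b (pad ω) k).1)
          - (sarahState f w0 η b (pad ω) k).2‖ ^ 2)
      ≤ 1 / (b : ℝ) * (((n : ℝ) - (b : ℝ)) / ((n : ℝ) - 1)) * L ^ 2 * η ^ 2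
          * ∑ j ∈ Finset.Icc 1 k,
              expec (fun ω : Fin (t + 1) → Batch n b =>
                ‖(sarahState f w0 η b (pad ω) (j - 1)).2‖ ^ 2) := by
    intro k
    induction k with
    | zero =>
      intro _
      have h0 : (fun ω : Fin (t + 1) → Batch n b =>
          ‖gradient P ((sarahState f w0 η b (pad ω) 0).1)
            - (sarahState f w0 η b (pad ω) 0).2‖ ^ 2) = fun _ => (0:ℝ) := by
        funext ω
        show ‖gradient P w0 - (n:ℝ)⁻¹ • ∑ i, gradient (f i) w0‖ ^ 2 = 0
        rw [hgrad w0, sub_self, norm_zero]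
        norm_num
      rw [h0]
      simp [expec]
    | succ k ih =>
      intro hk1
      have hstep := sarah_step hn f L hL hdiff hsmooth P hP w0 η hη b hb hbn t k hk1
      rw [expec_add_mul
        (fun ω : Fin (t + 1) → Batch n b =>
          ‖gradient P ((sarahState f w0 η b (pad ω) k).1)
            - (sarahState f w0 η b (pad ω) k).2‖ ^ 2)
        (fun ω : Fin (t + 1) → Batch n b => ‖(sarahState f w0 η b (pad ω) k).2‖ ^ 2)
        (1/(b:ℝ) * (((n:ℝ) - b)/((n:ℝ)-1)) * L^2 * η^2)] at hstep
      have ih' := ih (by omega)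
      have hsum : ∑ j ∈ Finset.Icc 1 (k+1),
            expec (fun ω : Fin (t + 1) → Batch n b =>
              ‖(sarahState f w0 η b (pad ω) (j - 1)).2‖ ^ 2)
          = (∑ j ∈ Finset.Icc 1 k,
              expec (fun ω : Fin (t + 1) → Batch n b =>
                ‖(sarahState f w0 η b (pad ω) (j - 1)).2‖ ^ 2))
            + expec (fun ω : Fin (t + 1) → Batch n b =>
                ‖(sarahState f w0 η b (pad ω) k).2‖ ^ 2) := by
        rw [Finset.sum_Icc_succ_top (by omega)]
        norm_num
      rw [hsum]
      linarith
  exact key t le_rfl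
end
end
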